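/- If a moded clause c : A ← A₁ ← ⋯ ← A_m is mode consistent and a goal matching its head A has all input arguments ground, then executing the clause left-to-right preserves groundness: for each i, the input arguments of Aᵢ are ground relative to the variables grounded so far, and after all premises succeed with ground outputs, the output arguments of A are ground. -/
import Mathlib


/-- First-order terms (a simplified instance of LF objects/types). -/
inductive Tm : Type where
  | var : Nat → Tm
  | const : Nat → Tm
  | app : Tm → Tm → Tm
deriving DecidableEq

/-- Substitutions as finite lists of bindings. -/
abbrev Subst := List (Nat × Tm)

def lookupS (σ : Subst) (x : Nat) : Tm :=
  match σ with
  | [] => Tm.var x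
  | (y, M) :: σ' => if x = y then M else lookupS σ' x

def applyS (σ : Subst) : Tm → Tm
  | Tm.var x => lookupS σ x
  | Tm.const c => Tm.const c
  | Tm.app t u => Tm.app (applyS σ t) (applyS σ u)

/-- Contexts assign types (terms) to variables. -/
abbrev Ctx := List (Nat × Tm)

/-- Composition of substitutions: ∅ ∘ θ = ∅, (σ, M/x) ∘ θ = (σ ∘ θ, M[θ]/x). -/
def compS (σ θ : Subst) : Subst := σ.map (fun p => (p.1, applyS θ p.2))

/-- Γ[σ]. -/
def ctxS (Γ : Ctx) (σ : Subst) : Ctx := Γ.map (fun p => (p.1, applyS σ p.2))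

/-- The free variables of a term. -/
def FV : Tm → List Nat
  | Tm.var x => [x]
  | Tm.const _ => []
  | Tm.app t u => FV t ++ FV u

/-- A term is ground if it has no free variables. -/
def Ground (t : Tm) : Prop := FV t = []

/-- The free variables of a list of terms. -/
def fvs (l : List Tm) : List Nat := (l.map FV).flatten

/-- `gvars headIn prems i`: the variables grounded after executing the first
`i` premises: `Γ₀` contains the (input) variables of the head's input
arguments (all occurrences are strict in this first-order setting) and
`Γᵢ = Γᵢ₋₁, Γ'ᵢ` where `Γ'ᵢ` contains the output variables of premise `i`. -/
def gvars (headIn : List Tm) (prems : List (List Tm × List Tm)) : Nat → List Nat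
  | 0 => fvs headIn
  | i + 1 => gvars headIn prems i ++ fvs (prems.getD i ([], [])).2

lemma ground_apply_iff (σ : Subst) (t : Tm) :
    Ground (applyS σ t) ↔ ∀ x ∈ FV t, Ground (lookupS σ x) := by
  induction t with
  | var x => simp [applyS, FV]
  | const c => simp [applyS, FV, Ground]
  | app a b iha ihb =>
    simp only [applyS, FV, Ground] at *
    constructor
    · intro h x hx
      rcases List.append_eq_nil_iff.mp h with ⟨h1, h2⟩
      rcases List.mem_append.mp hx with hx | hx
      · exact iha.mp h1 x hx
      · exact ihb.mp h2 x hx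
    · intro h
      show FV (applyS σ a) ++ FV (applyS σ b) = []
      rw [iha.mpr (fun x hx => h x (List.mem_append.mpr (Or.inl hx))),
          ihb.mpr (fun x hx => h x (List.mem_append.mpr (Or.inr hx)))]
      rfl

lemma mem_fvs {l : List Tm} {x : Nat} :
    x ∈ fvs l ↔ ∃ t ∈ l, x ∈ FV t := by
  simp [fvs]

theorem mode_consistent_groundness'
    (headIn : List Tm) (prems : List (List Tm × List Tm)) (σ : Subst)
    (hground_in : ∀ x ∈ fvs headIn, Ground (lookupS σ x))
    (hground_prem_out : ∀ i < prems.length,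
      ∀ t ∈ (prems.getD i ([], [])).2, Ground (applyS σ t)) :
    ∀ i, i ≤ prems.length → ∀ x ∈ gvars headIn prems i, Ground (lookupS σ x) := by
  intro i
  induction i with
  | zero => intro _ x hx; exact hground_in x hx
  | succ i ih =>
    intro hi x hx
    rcases List.mem_append.mp hx with hx | hx
    · exact ih (Nat.le_of_succ_le hi) x hx
    · rcases mem_fvs.mp hx with ⟨t, ht, hxt⟩
      exact (ground_apply_iff σ t).mp
        (hground_prem_out i (Nat.lt_of_succ_le hi) t ht) x hxt

/-- a mode consistent clause (head with input arguments
`headIn` and output arguments `headOut`, premises with their input and output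
argument lists) preserves groundness when executed left-to-right: if the head
is matched against a goal with ground inputs (so `σ` is ground on the input
variables of the head) and each premise succeeds producing ground outputs,
then the input arguments of each premise and the output arguments of the head
are ground under `σ`. -/
theorem mode_consistent_groundness
    (headIn headOut : List Tm) (prems : List (List Tm × List Tm)) (σ : Subst)
    (hmc_in : ∀ i < prems.length,
      ∀ y ∈ fvs (prems.getD i ([], [])).1, y ∈ gvars headIn prems i)
    (hmc_out : ∀ y ∈ fvs headOut, y ∈ gvars headIn prems prems.length)
    (hground_in : ∀ x ∈ fvs headIn, Ground (lookupS σ x))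
    (hground_prem_out : ∀ i < prems.length,
      ∀ t ∈ (prems.getD i ([], [])).2, Ground (applyS σ t)) :
    (∀ i < prems.length,
      ∀ t ∈ (prems.getD i ([], [])).1, Ground (applyS σ t)) ∧
    (∀ t ∈ headOut, Ground (applyS σ t)) := by
  have key := mode_consistent_groundness' headIn prems σ hground_in hground_prem_out
  constructor
  · intro i hi t ht
    refine (ground_apply_iff σ t).mpr fun x hx => ?_
    exact key i (Nat.le_of_lt hi) x (hmc_in i hi x (mem_fvs.mpr ⟨t, ht, hx⟩))
  · intro t ht
    refine (ground_apply_iff σ t).mpr fun x hx => ?_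
    exact key prems.length (Nat.le_refl _) x (hmc_out x (mem_fvs.mpr ⟨t, ht, hx⟩))
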